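/- Let σ, σ' be configurations of a threshold automaton. (1) If τ is a steady schedule applicable to σ with τ(σ) = σ', then the assignment sending each rule r to the number τ(r) of occurrences of r in τ witnesses steady reachability from σ to σ'. (2) Conversely, if the assignment {y_r}_{r∈R} witnesses steady reachability from σ to σ', then there exists a steady schedule τ applicable to σ with τ(σ) = σ' in which every rule r occurs exactly y_r times. -/

import Mathlib

/-!
Threshold automata (Konnov, Veith, Widder), following
"Complexity of Verification and Synthesis of Threshold Automata".
-/

/-- A threshold guard `x ⋈ a₀ + a₁·p₁ + … + a_{|Π|}·p_{|Π|}` over shared variables `V` and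
parameters `P`.  `isRise = true` means a *rise* guard `x ≥ …`, and `isRise = false` means a
*fall* guard `x < …`. -/
structure TGuard (V P : Type) where
  var : V
  isRise : Bool
  a0 : ℚ
  coef : P → ℚ

/-- A configuration `σ = (κ, g, p)`: numbers of processes in each location, values of the
shared variables, and values of the parameters. -/
structure Config (L V P : Type) where
  κ : L → ℕ
  g : V → ℕ
  p : P → ℕ

/-- A rule of a threshold automaton: source and target locations, a guard that is a
(finite) conjunction of threshold guards, and an update `V → {0,1}`. -/
structure TRule (L V P : Type) where
  src : L
  dst : L
  guard : List (TGuard V P)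
  upd : V → ℕ
  upd_le_one : ∀ v, upd v ≤ 1

/-- A threshold automaton `(L, I, Γ, R)` together with its environment `(Π, RC, N)`.
`L`, `V`, `P` are the types of locations, shared variables and parameters, and `R` is the
index type of rules. -/
structure TA (L V P R : Type) where
  initial : Set L
  initial_nonempty : initial.Nonempty
  rc : Set (P → ℕ)
  N : (P → ℕ) → ℕ
  rule : R → TRule L V P

variable {L V P R : Type}

/-- Satisfaction of a threshold guard by values `g` of the shared variables and `p` of the
parameters. -/
def TGuard.holds [Fintype P] (φ : TGuard V P) (g : V → ℕ) (p : P → ℕ) : Prop :=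
  if φ.isRise then φ.a0 + ∑ i : P, φ.coef i * (p i : ℚ) ≤ (g φ.var : ℚ)
  else (g φ.var : ℚ) < φ.a0 + ∑ i : P, φ.coef i * (p i : ℚ)

/-- A configuration enables a rule. -/
def TRule.enabledAt [Fintype P] (r : TRule L V P) (σ : Config L V P) : Prop :=
  0 < σ.κ r.src ∧ ∀ φ ∈ r.guard, φ.holds σ.g σ.p

/-- The result of firing a rule at a configuration. -/
def TRule.fire [DecidableEq L] (r : TRule L V P) (σ : Config L V P) : Config L V P where
  κ := fun ℓ => σ.κ ℓ + (if ℓ = r.dst then 1 else 0) - (if ℓ = r.src then 1 else 0)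
  g := fun v => σ.g v + r.upd v
  p := σ.p

namespace TA

variable [Fintype P] [DecidableEq L]

/-- `σ` is a configuration of `ta`: the parameters satisfy the resilience condition and the
total number of processes is `N(p)`. -/
def validConfig [Fintype L] (ta : TA L V P R) (σ : Config L V P) : Prop :=
  σ.p ∈ ta.rc ∧ ∑ ℓ : L, σ.κ ℓ = ta.N σ.p

/-- Initial configurations. -/
def isInitial [Fintype L] (ta : TA L V P R) (σ : Config L V P) : Prop :=
  ta.validConfig σ ∧ (∀ ℓ, ℓ ∉ ta.initial → σ.κ ℓ = 0) ∧ ∀ v, σ.g v = 0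

/-- A schedule (finite sequence of rules) is applicable to a configuration. -/
def applicable (ta : TA L V P R) : Config L V P → List R → Prop
  | _, [] => True
  | σ, r :: τ => (ta.rule r).enabledAt σ ∧ ta.applicable ((ta.rule r).fire σ) τ

/-- The configuration `τ(σ)` resulting from applying a schedule. -/
def apply (ta : TA L V P R) : Config L V P → List R → Config L V P
  | σ, [] => σ
  | σ, r :: τ => ta.apply ((ta.rule r).fire σ) τ

/-- The configurations visited by the path from `σ` along `τ` (including both endpoints). -/
def visited (ta : TA L V P R) : Config L V P → List R → List (Config L V P)
  | σ, [] => [σ]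
  | σ, r :: τ => σ :: ta.visited ((ta.rule r).fire σ) τ

/-- Reachability `σ →* σ'`. -/
def reaches (ta : TA L V P R) (σ σ' : Config L V P) : Prop :=
  ∃ τ : List R, ta.applicable σ τ ∧ ta.apply σ τ = σ'

/-- The set of all threshold guards occurring in rules of the automaton. -/
def guards (ta : TA L V P R) : Set (TGuard V P) :=
  {φ | ∃ r : R, φ ∈ (ta.rule r).guard}

/-- The context `ω(σ)`: rise guards of `ta` that are true in `σ` together with fall guards
of `ta` that are false in `σ`. -/
def context (ta : TA L V P R) (σ : Config L V P) : Set (TGuard V P) :=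
  {φ | φ ∈ ta.guards ∧ if φ.isRise then φ.holds σ.g σ.p else ¬ φ.holds σ.g σ.p}

/-- A schedule applicable at `σ` is steady if all configurations visited by the
corresponding path have the same context. -/
def steady (ta : TA L V P R) (σ : Config L V P) (τ : List R) : Prop :=
  ∀ σ' ∈ ta.visited σ τ, ta.context σ' = ta.context σ

end TA

/-- There is a chain of rules, all fired at least once according to `y`, starting at a
location populated in `σ` and leading to the rule `r`. -/
def TA.chainTo [Fintype P] (ta : TA L V P R) (y : R → ℕ) (σ : Config L V P) (r : R) : Prop :=
  ∃ (c : List R) (hne : c ≠ []),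
    (∀ r' ∈ c, 0 < y r') ∧
    0 < σ.κ (ta.rule (c.head hne)).src ∧
    List.Chain' (fun a b => (ta.rule a).dst = (ta.rule b).src) c ∧
    c.getLast hne = r

/-- The assignment `y : R → ℕ` witnesses steady reachability from `σ` to `σ'`. -/
def TA.witnessesSteady [Fintype P] [DecidableEq L] [Fintype R]
    (ta : TA L V P R) (σ σ' : Config L V P) (y : R → ℕ) : Prop :=
  σ.p = σ'.p ∧
  ta.context σ = ta.context σ' ∧
  (∀ ℓ : L, (σ'.κ ℓ : ℤ) - (σ.κ ℓ : ℤ) =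
      (∑ r : R, if (ta.rule r).dst = ℓ then (y r : ℤ) else 0) -
      (∑ r : R, if (ta.rule r).src = ℓ then (y r : ℤ) else 0)) ∧
  (∀ z : V, (σ'.g z : ℤ) - (σ.g z : ℤ) = ∑ r : R, (y r : ℤ) * ((ta.rule r).upd z : ℤ)) ∧
  (∀ r : R, 0 < y r → ∀ φ ∈ (ta.rule r).guard, φ.holds σ.g σ.p) ∧
  (∀ r : R, 0 < y r → ta.chainTo y σ r)

/-! ### Auxiliary lemmas -/

set_option linter.unusedSectionVars false
set_option linter.unreachableTactic false
set_option linter.unusedTactic false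

section Aux

variable [Fintype P] [DecidableEq L]

lemma fire_p (r : TRule L V P) (σ : Config L V P) : (r.fire σ).p = σ.p := rfl

lemma fire_g (r : TRule L V P) (σ : Config L V P) (v : V) :
    (r.fire σ).g v = σ.g v + r.upd v := rfl

lemma fire_κ_int (r : TRule L V P) (σ : Config L V P) (h : 0 < σ.κ r.src) (ℓ : L) :
    (((r.fire σ).κ ℓ : ℤ)) =
      (σ.κ ℓ : ℤ) + (if r.dst = ℓ then 1 else 0) - (if r.src = ℓ then 1 else 0) := by
  show ((σ.κ ℓ + (if ℓ = r.dst then 1 else 0) - (if ℓ = r.src then 1 else 0) : ℕ) : ℤ) = _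
  have hle : (if ℓ = r.src then 1 else 0) ≤ σ.κ ℓ + (if ℓ = r.dst then 1 else 0) := by
    split_ifs with h1 <;> first | omega | (subst h1; omega)
  rw [Nat.cast_sub hle]
  push_cast
  congr 1
  · congr 1
    simp [eq_comm]
  · simp [eq_comm]

lemma fire_κ_dst_pos (r : TRule L V P) (σ : Config L V P) (h : 0 < σ.κ r.src) :
    0 < (r.fire σ).κ r.dst := by
  show 0 < σ.κ r.dst + (if r.dst = r.dst then 1 else 0) - (if r.dst = r.src then 1 else 0)
  split_ifs with h1 h2 <;> simp_all <;> omega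

lemma fire_κ_pos_of_ne (r : TRule L V P) (σ : Config L V P) {a : L}
    (ha : a ≠ r.src) (hpos : 0 < σ.κ a) : 0 < (r.fire σ).κ a := by
  show 0 < σ.κ a + (if a = r.dst then 1 else 0) - (if a = r.src then 1 else 0)
  split_ifs <;> omega

lemma fire_κ_src_zero (r : TRule L V P) (σ : Config L V P)
    (h0 : (r.fire σ).κ r.src = 0) (h : 0 < σ.κ r.src) :
    σ.κ r.src = 1 ∧ r.dst ≠ r.src := by
  have e : (r.fire σ).κ r.src
      = σ.κ r.src + (if r.src = r.dst then 1 else 0) - (if r.src = r.src then 1 else 0) := rfl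
  rw [if_pos rfl] at e
  by_cases h1 : r.src = r.dst
  · rw [if_pos h1] at e; omega
  · rw [if_neg h1] at e
    exact ⟨by omega, fun hd => h1 hd.symm⟩

namespace TA

lemma apply_p (ta : TA L V P R) : ∀ (τ : List R) (σ : Config L V P), (ta.apply σ τ).p = σ.p
  | [], σ => rfl
  | r :: τ, σ => by
      rw [TA.apply, apply_p ta τ, fire_p]

lemma apply_mem_visited (ta : TA L V P R) :
    ∀ (τ : List R) (σ : Config L V P), ta.apply σ τ ∈ ta.visited σ τ
  | [], σ => by simp [TA.apply, TA.visited]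
  | r :: τ, σ => by
      rw [TA.apply, TA.visited]
      exact List.mem_cons_of_mem _ (apply_mem_visited ta τ _)

lemma self_mem_visited (ta : TA L V P R) (τ : List R) (σ : Config L V P) :
    σ ∈ ta.visited σ τ := by
  cases τ <;> simp [TA.visited]

end TA

end Aux
section Aux2

variable [Fintype P] [DecidableEq L]

lemma TGuard.holds_mono_rise (φ : TGuard V P) (hr : φ.isRise = true) {g g' : V → ℕ}
    (p : P → ℕ) (hle : g φ.var ≤ g' φ.var) (h : φ.holds g p) : φ.holds g' p := by
  unfold TGuard.holds at *
  simp only [hr, reduceIte] at h ⊢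
  exact h.trans (by exact_mod_cast hle)

lemma TGuard.holds_anti_fall (φ : TGuard V P) (hr : φ.isRise = false) {g g' : V → ℕ}
    (p : P → ℕ) (hle : g φ.var ≤ g' φ.var) (h : φ.holds g' p) : φ.holds g p := by
  unfold TGuard.holds at *
  simp only [hr, reduceIte] at h ⊢
  exact lt_of_le_of_lt (by exact_mod_cast hle) h

lemma TA.holds_iff_of_context_eq (ta : TA L V P R) {σ σ' : Config L V P}
    (h : ta.context σ = ta.context σ') {φ : TGuard V P} (hφ : φ ∈ ta.guards) :
    φ.holds σ.g σ.p ↔ φ.holds σ'.g σ'.p := by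
  have hx := Set.ext_iff.mp h φ
  simp only [TA.context, Set.mem_setOf_eq, hφ, true_and] at hx
  cases hb : φ.isRise
  · simp only [hb, reduceIte] at hx; exact not_iff_not.mp hx
  · simp only [hb, reduceIte] at hx; exact hx

lemma TA.context_eq_of_sandwich (ta : TA L V P R) {σ σ₁ σ₂ : Config L V P}
    (hp1 : σ₁.p = σ.p) (hp2 : σ₂.p = σ.p)
    (h01 : ∀ v, σ.g v ≤ σ₁.g v) (h12 : ∀ v, σ₁.g v ≤ σ₂.g v)
    (hctx : ta.context σ = ta.context σ₂) :
    ta.context σ₁ = ta.context σ := by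
  have key : ∀ φ ∈ ta.guards, (φ.holds σ₁.g σ₁.p ↔ φ.holds σ.g σ.p) := by
    intro φ hφ
    have hiff := ta.holds_iff_of_context_eq hctx hφ
    cases hb : φ.isRise
    · -- fall guard
      constructor
      · intro h1
        rw [hp1] at h1
        exact φ.holds_anti_fall hb σ.p (h01 _) h1
      · intro h0
        have h2 : φ.holds σ₂.g σ₂.p := hiff.mp h0
        rw [hp2] at h2
        rw [hp1]
        exact φ.holds_anti_fall hb σ.p (h12 _) h2
    · -- rise guard
      constructor
      · intro h1
        have h2 : φ.holds σ₂.g σ₂.p := by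
          rw [hp2]; rw [hp1] at h1
          exact φ.holds_mono_rise hb σ.p (h12 _) h1
        exact hiff.mpr h2
      · intro h0
        rw [hp1]
        exact φ.holds_mono_rise hb σ.p (h01 _) h0
  ext φ
  simp only [TA.context, Set.mem_setOf_eq]
  constructor
  · rintro ⟨hφ, hc⟩
    refine ⟨hφ, ?_⟩
    cases hb : φ.isRise
    · simp only [hb, reduceIte] at hc ⊢
      exact fun hh => hc ((key φ hφ).mpr hh)
    · simp only [hb, reduceIte] at hc ⊢
      exact (key φ hφ).mp hc
  · rintro ⟨hφ, hc⟩
    refine ⟨hφ, ?_⟩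
    cases hb : φ.isRise
    · simp only [hb, reduceIte] at hc ⊢
      exact fun hh => hc ((key φ hφ).mp hh)
    · simp only [hb, reduceIte] at hc ⊢
      exact (key φ hφ).mpr hc

end Aux2
section Aux3

/-- Rules reachable by a chain of `y`-positive rules starting at a location in `S`. -/
inductive ReachF (ta : TA L V P R) (y : R → ℕ) (S : L → Prop) : R → Prop
  | base (r : R) : 0 < y r → S (ta.rule r).src → ReachF ta y S r
  | step (r' r : R) : ReachF ta y S r' → 0 < y r → (ta.rule r').dst = (ta.rule r).src →
      ReachF ta y S r

lemma ReachF.mono {ta : TA L V P R} {y y₂ : R → ℕ} {S S₂ : L → Prop} {r : R}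
    (h : ReachF ta y S r) (hy : ∀ x, 0 < y x → 0 < y₂ x) (hS : ∀ a, S a → S₂ a) :
    ReachF ta y₂ S₂ r := by
  induction h with
  | base r hr hs => exact .base r (hy _ hr) (hS _ hs)
  | step r' r h' hr hd ih => exact .step r' r ih (hy _ hr) hd

lemma ReachF.pos {ta : TA L V P R} {y : R → ℕ} {S : L → Prop} {r : R}
    (h : ReachF ta y S r) : 0 < y r := by
  cases h with
  | base _ hr _ => exact hr
  | step _ _ _ hr _ => exact hr

lemma ReachF.exists_base {ta : TA L V P R} {y : R → ℕ} {S : L → Prop} {r : R}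
    (h : ReachF ta y S r) : ∃ e, 0 < y e ∧ S (ta.rule e).src := by
  induction h with
  | base r hr hs => exact ⟨r, hr, hs⟩
  | step r' r h' hr hd ih => exact ih

variable [Fintype P] [DecidableEq L]

lemma reachF_getLast {ta : TA L V P R} {y : R → ℕ} {S : L → Prop} :
    ∀ (c : List R) (hne : c ≠ []), (∀ r' ∈ c, 0 < y r') →
      List.Chain' (fun a b => (ta.rule a).dst = (ta.rule b).src) c →
      ReachF ta y S (c.head hne) → ReachF ta y S (c.getLast hne)
  | [a], _, _, _, h => h
  | a :: b :: t, _, hpos, hchain, h => by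
    have hrel : (ta.rule a).dst = (ta.rule b).src := hchain.rel_head
    have hb : ReachF ta y S b := .step a b h (hpos b (by simp)) hrel
    have := reachF_getLast (b :: t) (by simp)
      (fun x hx => hpos x (List.mem_cons_of_mem _ hx)) hchain.tail hb
    simpa [List.getLast_cons] using this

lemma reachF_of_chainTo {ta : TA L V P R} {y : R → ℕ} {σ : Config L V P} {r : R}
    (h : ta.chainTo y σ r) : ReachF ta y (fun a => 0 < σ.κ a) r := by
  obtain ⟨c, hne, hpos, hhead, hchain, hlast⟩ := h
  have h0 : ReachF ta y (fun a => 0 < σ.κ a) (c.head hne) :=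
    .base _ (hpos _ (List.head_mem hne)) hhead
  rw [← hlast]
  exact reachF_getLast c hne hpos hchain h0

lemma chainTo_of_reachF {ta : TA L V P R} {y : R → ℕ} {σ : Config L V P} {r : R}
    (h : ReachF ta y (fun a => 0 < σ.κ a) r) : ta.chainTo y σ r := by
  induction h with
  | base r hr hs => exact ⟨[r], by simp, by simpa using hr, by simpa using hs, List.isChain_singleton _, by simp⟩
  | step r' r h' hr hd ih =>
    obtain ⟨c, hne, hpos, hhead, hchain, hlast⟩ := ih
    refine ⟨c ++ [r], by simp, ?_, ?_, ?_, ?_⟩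
    · intro x hx
      rcases List.mem_append.mp hx with hx | hx
      · exact hpos x hx
      · simp at hx; subst hx; exact hr
    · rwa [List.head_append_of_ne_nil hne]
    · apply List.IsChain.append hchain (by simp)
      intro x hx z hz
      simp at hz; subst hz
      rw [List.getLast?_eq_getLast hne] at hx
      simp at hx; subst hx
      rw [hlast]; exact hd
    · simp

end Aux3
section Aux4

variable [Fintype P] [DecidableEq L] [DecidableEq R] [Fintype R]

/-- Decrement `y` at `e`. -/
def decY (y : R → ℕ) (e : R) : R → ℕ := fun r => if r = e then y e - 1 else y r

lemma sum_ite_indicator (e : R) (f : R → Prop) [DecidablePred f] :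
    ∑ r : R, (if f r then (if r = e then (1:ℤ) else 0) else 0) = if f e then 1 else 0 := by
  rw [Finset.sum_congr rfl
    (fun r _ => show (if f r then (if r = e then (1:ℤ) else 0) else 0)
        = if r = e then (if f r then 1 else 0) else 0 by split_ifs <;> simp_all)]
  simp [Finset.sum_ite_eq']

lemma decY_cast (y : R → ℕ) (e : R) (he : 0 < y e) (r : R) :
    ((decY y e r : ℕ) : ℤ) = (y r : ℤ) - (if r = e then 1 else 0) := by
  unfold decY
  split_ifs with h
  · subst h; have : (1:ℕ) ≤ y r := he; push_cast [Nat.cast_sub this]; ring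
  · ring

lemma sum_ite_dec (y : R → ℕ) (e : R) (he : 0 < y e) (f : R → Prop) [DecidablePred f] :
    ∑ r : R, (if f r then ((decY y e r : ℕ) : ℤ) else 0)
      = (∑ r : R, if f r then (y r : ℤ) else 0) - (if f e then 1 else 0) := by
  have : ∀ r : R, (if f r then ((decY y e r : ℕ) : ℤ) else 0)
      = (if f r then (y r : ℤ) else 0) - (if f r then (if r = e then (1:ℤ) else 0) else 0) := by
    intro r
    rw [decY_cast y e he r]
    split_ifs <;> ring
  rw [Finset.sum_congr rfl (fun r _ => this r), Finset.sum_sub_distrib, sum_ite_indicator]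

lemma sum_mul_dec (y : R → ℕ) (e : R) (he : 0 < y e) (u : R → ℤ) :
    ∑ r : R, ((decY y e r : ℕ) : ℤ) * u r = (∑ r : R, (y r : ℤ) * u r) - u e := by
  have : ∀ r : R, ((decY y e r : ℕ) : ℤ) * u r
      = (y r : ℤ) * u r - (if r = e then u r else 0) := by
    intro r
    rw [decY_cast y e he r]
    split_ifs <;> ring
  rw [Finset.sum_congr rfl (fun r _ => this r), Finset.sum_sub_distrib]
  simp [Finset.sum_ite_eq']

lemma patch {ta : TA L V P R} {y : R → ℕ} {σ : Config L V P} {e : R}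
    (hsrc : 0 < σ.κ (ta.rule e).src)
    (good : ∀ f, 0 < decY y e f → (ta.rule f).src = (ta.rule e).src →
      ReachF ta (decY y e) (fun a => 0 < ((ta.rule e).fire σ).κ a) f) :
    ∀ f, ReachF ta y (fun a => 0 < σ.κ a) f → 0 < decY y e f →
      ReachF ta (decY y e) (fun a => 0 < ((ta.rule e).fire σ).κ a) f := by
  intro f hf
  induction hf with
  | base r hr hs =>
    intro hyf
    by_cases hsu : (ta.rule r).src = (ta.rule e).src
    · exact good r hyf hsu
    · exact .base r hyf (fire_κ_pos_of_ne _ _ hsu hs)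
  | step r' r h' hyr hd ih =>
    intro hyf
    by_cases h2 : 0 < decY y e r'
    · exact .step r' r (ih h2) hyf hd
    · have hre : r' = e := by
        by_contra hne
        have h3 : decY y e r' = y r' := if_neg hne
        have h4 := h'.pos
        omega
      subst hre
      refine .base r hyf ?_
      rw [← hd]
      exact fire_κ_dst_pos _ _ hsrc

lemma avoidU {ta : TA L V P R} {y : R → ℕ} {S : L → Prop} (u : L) :
    ∀ h, ReachF ta y S h →
      ReachF ta (fun r => if (ta.rule r).src = u then 0 else y r) (fun a => S a ∧ a ≠ u) h ∨
      ∃ e', 0 < y e' ∧ (ta.rule e').src = u ∧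
        (h = e' ∨ ReachF ta (fun r => if (ta.rule r).src = u then 0 else y r)
          (fun a => a = (ta.rule e').dst) h) := by
  intro h hh
  induction hh with
  | base r hr hs =>
    by_cases hsu : (ta.rule r).src = u
    · exact Or.inr ⟨r, hr, hsu, Or.inl rfl⟩
    · exact Or.inl (.base r (by simpa [hsu] using hr) ⟨hs, hsu⟩)
  | step r' r h' hyr hd ih =>
    by_cases hsu : (ta.rule r).src = u
    · exact Or.inr ⟨r, hyr, hsu, Or.inl rfl⟩
    · have hz : 0 < (fun r => if (ta.rule r).src = u then 0 else y r) r := by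
        simpa [hsu] using hyr
      rcases ih with hL | ⟨e', he', hse', hcase⟩
      · exact Or.inl (.step r' r hL hz hd)
      · refine Or.inr ⟨e', he', hse', Or.inr ?_⟩
        rcases hcase with rfl | hR
        · exact .base r hz (by rw [← hd])
        · exact .step r' r hR hz hd

end Aux4
section Aux5

variable [Fintype P] [DecidableEq L] [DecidableEq R] [Fintype R]

lemma select {ta : TA L V P R} {σ σ' : Config L V P} {y : R → ℕ}
    (hflow : ∀ ℓ : L, (σ'.κ ℓ : ℤ) - (σ.κ ℓ : ℤ) =
      (∑ r : R, if (ta.rule r).dst = ℓ then (y r : ℤ) else 0) -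
      (∑ r : R, if (ta.rule r).src = ℓ then (y r : ℤ) else 0))
    (hchain : ∀ r, 0 < y r → ReachF ta y (fun a => 0 < σ.κ a) r)
    {r0 : R} (h0 : 0 < y r0) :
    ∃ e, 0 < y e ∧ 0 < σ.κ (ta.rule e).src ∧
      ∀ f, 0 < decY y e f → (ta.rule f).src = (ta.rule e).src →
        ReachF ta (decY y e) (fun a => 0 < ((ta.rule e).fire σ).κ a) f := by
  obtain ⟨e₀, he₀, hs₀⟩ := (hchain r0 h0).exists_base
  set u := (ta.rule e₀).src with hu
  by_cases hA : 0 < ((ta.rule e₀).fire σ).κ u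
  · -- the source stays populated
    exact ⟨e₀, he₀, hs₀, fun f hyf hsf => .base f hyf (by rw [hsf, ← hu]; exact hA)⟩
  by_cases hB : ∃ e', 0 < y e' ∧ (ta.rule e').src = u ∧
      ((ta.rule e').dst = u ∨ ∃ rs, ReachF ta (decY y e') (fun a => a = (ta.rule e').dst) rs ∧
        (ta.rule rs).dst = u)
  · -- a cycle through `u`
    obtain ⟨e', he', hse', hcyc⟩ := hB
    refine ⟨e', he', by rw [hse']; exact hs₀, ?_⟩
    intro f hyf hsf
    rcases hcyc with hdu | ⟨rs, hrs, hrsd⟩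
    · -- e' returns directly to u
      refine .base f hyf ?_
      rw [hsf, hse']
      have := fire_κ_dst_pos (ta.rule e') σ (by rw [hse']; exact hs₀)
      rwa [hdu] at this
    · refine .step rs f (hrs.mono (fun x hx => hx) ?_) hyf (by rw [hrsd, ← hse', ← hsf])
      intro a ha
      rw [ha]
      exact fire_κ_dst_pos (ta.rule e') σ (by rw [hse']; exact hs₀)
  · -- no cycle through u : use balance at u
    refine ⟨e₀, he₀, hs₀, ?_⟩
    intro f hyf hsf
    have hA0 : ((ta.rule e₀).fire σ).κ u = 0 := by omega
    obtain ⟨hκ1, hdne⟩ := fire_κ_src_zero (ta.rule e₀) σ hA0 hs₀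
    -- there is a rule entering u
    have hg : ∃ g, 0 < y g ∧ (ta.rule g).dst = u := by
      by_contra hng
      push_neg at hng
      have hin : (∑ r : R, if (ta.rule r).dst = u then (y r : ℤ) else 0) = 0 := by
        apply Finset.sum_eq_zero
        intro r _
        split_ifs with hd
        · rcases Nat.eq_zero_or_pos (y r) with h | h
          · simp [h]
          · exact absurd hd (hng r h)
        · rfl
      have hout : (2 : ℤ) ≤ ∑ r : R, if (ta.rule r).src = u then (y r : ℤ) else 0 := by
        by_cases hfe : f = e₀
        · have h2 : 2 ≤ y e₀ := by
            have : decY y e₀ f = y e₀ - 1 := by rw [hfe]; simp [decY]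
            omega
          calc (2:ℤ) ≤ (if (ta.rule e₀).src = u then (y e₀ : ℤ) else 0) := by
                rw [if_pos hu.symm]; exact_mod_cast h2
            _ ≤ _ := Finset.single_le_sum (f := fun r => if (ta.rule r).src = u then (y r : ℤ) else 0)
                (fun r _ => by
                  show (0:ℤ) ≤ if (ta.rule r).src = u then (y r : ℤ) else 0
                  split_ifs <;> simp) (Finset.mem_univ e₀)
        · have hyf' : 0 < y f := by
            have : decY y e₀ f = y f := if_neg hfe
            omega
          have hsub : ({e₀, f} : Finset R) ⊆ Finset.univ := Finset.subset_univ _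
          have hpair : (∑ r ∈ ({e₀, f} : Finset R),
              if (ta.rule r).src = u then (y r : ℤ) else 0)
              = (if (ta.rule e₀).src = u then (y e₀ : ℤ) else 0)
                + (if (ta.rule f).src = u then (y f : ℤ) else 0) :=
            Finset.sum_pair (fun h => hfe h.symm)
          calc (2:ℤ) ≤ (if (ta.rule e₀).src = u then (y e₀ : ℤ) else 0)
                + (if (ta.rule f).src = u then (y f : ℤ) else 0) := by
                rw [if_pos hu.symm, if_pos hsf]
                omega
            _ = _ := hpair.symm
            _ ≤ _ := Finset.sum_le_sum_of_subset_of_nonneg hsub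
                (fun r _ _ => by split_ifs <;> simp)
      have := hflow u
      have hpos' : (0:ℤ) ≤ (σ'.κ u : ℤ) := by positivity
      rw [hin] at this
      have : (σ.κ u : ℤ) = 1 := by exact_mod_cast hκ1
      omega
    obtain ⟨g, hyg, hdg⟩ := hg
    -- analyse the chain to g
    rcases avoidU u g (hchain g hyg) with hL | ⟨e', he', hse', hcase⟩
    · -- chain to g avoiding u entirely; extend by f
      have hg' : ReachF ta (decY y e₀) (fun a => 0 < ((ta.rule e₀).fire σ).κ a) g := by
        refine hL.mono ?_ ?_
        · intro x hx
          by_cases hsx : (ta.rule x).src = u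
          · simp [hsx] at hx
          · have hxe : x ≠ e₀ := fun h => hsx (by rw [h, hu])
            simp only [hsx, if_false] at hx
            simpa [decY, hxe] using hx
        · rintro a ⟨ha, hau⟩
          exact fire_κ_pos_of_ne _ _ (by rw [← hu]; exact hau) ha
      exact .step g f hg' hyf (by rw [hdg, hsf])
    · -- this would give a cycle through u, contradicting ¬hB
      exfalso
      apply hB
      refine ⟨e', he', hse', ?_⟩
      rcases hcase with rfl | hR
      · exact Or.inl hdg
      · refine Or.inr ⟨g, hR.mono ?_ (fun a ha => ha), hdg⟩
        intro x hx
        by_cases hsx : (ta.rule x).src = u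
        · simp [hsx] at hx
        · have hxe : x ≠ e' := fun h => hsx (by rw [h, hse'])
          simp only [hsx, if_false] at hx
          simpa [decY, hxe] using hx

end Aux5
section Aux6

lemma Config.ext' {σ σ' : Config L V P} (h1 : σ.κ = σ'.κ) (h2 : σ.g = σ'.g)
    (h3 : σ.p = σ'.p) : σ = σ' := by
  cases σ; cases σ'; cases h1; cases h2; cases h3; rfl

variable [Fintype P] [DecidableEq L] [DecidableEq R] [Fintype R]

lemma decY_le (y : R → ℕ) (e : R) (r : R) : decY y e r ≤ y r := by
  unfold decY; split_ifs with h
  · rw [h]; omega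
  · exact le_rfl

lemma sum_decY {y : R → ℕ} {e : R} (he : 0 < y e) :
    ∑ r : R, decY y e r < ∑ r : R, y r := by
  apply Finset.sum_lt_sum (fun r _ => decY_le y e r) ⟨e, Finset.mem_univ e, ?_⟩
  unfold decY; simp; omega

lemma step_witness {ta : TA L V P R} {σ σ' : Config L V P} {y : R → ℕ}
    (hw : ta.witnessesSteady σ σ' y) {r0 : R} (h0 : 0 < y r0) :
    ∃ e, 0 < y e ∧ (ta.rule e).enabledAt σ ∧
      ta.witnessesSteady ((ta.rule e).fire σ) σ' (decY y e) := by
  obtain ⟨hp, hctx, hflow, hshared, hguards, hchains⟩ := hw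
  have hchain' : ∀ r, 0 < y r → ReachF ta y (fun a => 0 < σ.κ a) r :=
    fun r h => reachF_of_chainTo (hchains r h)
  obtain ⟨e, he, hsrc, good⟩ := select hflow hchain' h0
  set σ₁ := (ta.rule e).fire σ with hσ₁
  have hp1 : σ₁.p = σ.p := rfl
  have h01 : ∀ v, σ.g v ≤ σ₁.g v := fun v => Nat.le_add_right _ _
  have h12 : ∀ v, σ₁.g v ≤ σ'.g v := by
    intro v
    have hsum := hshared v
    have hterm : ((y e : ℤ)) * ((ta.rule e).upd v : ℤ)
        ≤ ∑ r : R, (y r : ℤ) * ((ta.rule r).upd v : ℤ) :=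
      Finset.single_le_sum (f := fun r => (y r : ℤ) * ((ta.rule r).upd v : ℤ))
        (fun r _ => by positivity) (Finset.mem_univ e)
    have h1 : ((ta.rule e).upd v : ℤ) ≤ (y e : ℤ) * ((ta.rule e).upd v : ℤ) := by
      have hy1 : (1:ℤ) ≤ (y e : ℤ) := by exact_mod_cast he
      have hu0 : (0:ℤ) ≤ ((ta.rule e).upd v : ℤ) := by positivity
      nlinarith
    have : (σ₁.g v : ℤ) = (σ.g v : ℤ) + ((ta.rule e).upd v : ℤ) := by
      show ((σ.g v + (ta.rule e).upd v : ℕ) : ℤ) = _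
      push_cast; ring
    have : (σ₁.g v : ℤ) ≤ (σ'.g v : ℤ) := by linarith
    exact_mod_cast this
  have hctx1 : ta.context σ₁ = ta.context σ :=
    ta.context_eq_of_sandwich hp1 hp.symm h01 h12 hctx
  refine ⟨e, he, ⟨hsrc, hguards e he⟩, ?_, ?_, ?_, ?_, ?_, ?_⟩
  · exact hp
  · exact hctx1.trans hctx
  · intro ℓ
    have h1 := hflow ℓ
    have h2 := fire_κ_int (ta.rule e) σ hsrc ℓ
    rw [sum_ite_dec y e he (fun r => (ta.rule r).dst = ℓ),
        sum_ite_dec y e he (fun r => (ta.rule r).src = ℓ)]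
    rw [show ((σ₁.κ ℓ : ℕ) : ℤ) = (σ.κ ℓ : ℤ) + (if (ta.rule e).dst = ℓ then 1 else 0)
      - (if (ta.rule e).src = ℓ then 1 else 0) from h2]
    linarith
  · intro z
    have h1 := hshared z
    rw [sum_mul_dec y e he (fun r => ((ta.rule r).upd z : ℤ))]
    have h2 : (σ₁.g z : ℤ) = (σ.g z : ℤ) + ((ta.rule e).upd z : ℤ) := by
      show ((σ.g z + (ta.rule e).upd z : ℕ) : ℤ) = _
      push_cast; ring
    rw [h2]
    linarith
  · intro r hr φ hφ
    have hyr : 0 < y r := lt_of_lt_of_le hr (decY_le y e r)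
    have hφg : φ ∈ ta.guards := ⟨r, hφ⟩
    exact (ta.holds_iff_of_context_eq hctx1 hφg).mpr (hguards r hyr φ hφ)
  · intro r hr
    exact chainTo_of_reachF (patch hsrc good r (hchain' r (lt_of_lt_of_le hr (decY_le y e r))) hr)

end Aux6
section Aux7

variable [Fintype P] [DecidableEq L] [DecidableEq R] [Fintype R]

lemma count_cons_cast (e r : R) (τ : List R) :
    (((e :: τ).count r : ℕ) : ℤ) = ((τ.count r : ℕ) : ℤ) + (if r = e then 1 else 0) := by
  rw [List.count_cons]
  by_cases h : r = e
  · subst h; simp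
  · have h2 : ¬(e = r) := fun hh => h hh.symm
    simp [h, h2]

lemma sum_ite_count_cons (e : R) (τ : List R) (f : R → Prop) [DecidablePred f] :
    ∑ r : R, (if f r then (((e :: τ).count r : ℕ) : ℤ) else 0)
      = (∑ r : R, if f r then ((τ.count r : ℕ) : ℤ) else 0) + (if f e then 1 else 0) := by
  have : ∀ r : R, (if f r then (((e :: τ).count r : ℕ) : ℤ) else 0)
      = (if f r then ((τ.count r : ℕ) : ℤ) else 0)
        + (if f r then (if r = e then (1:ℤ) else 0) else 0) := by
    intro r
    rw [count_cons_cast]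
    split_ifs <;> ring
  rw [Finset.sum_congr rfl (fun r _ => this r), Finset.sum_add_distrib, sum_ite_indicator]

lemma steady_tail {ta : TA L V P R} {σ : Config L V P} {e : R} {τ : List R}
    (hst : ta.steady σ (e :: τ)) :
    ta.context ((ta.rule e).fire σ) = ta.context σ ∧ ta.steady ((ta.rule e).fire σ) τ := by
  have h1 : ta.context ((ta.rule e).fire σ) = ta.context σ :=
    hst _ (by rw [TA.visited]; exact List.mem_cons_of_mem _ (TA.self_mem_visited ta τ _))
  refine ⟨h1, fun σ'' h => ?_⟩
  rw [hst σ'' (by rw [TA.visited]; exact List.mem_cons_of_mem _ h), h1]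

lemma apply_flow {ta : TA L V P R} :
    ∀ (τ : List R) (σ : Config L V P), ta.applicable σ τ → ∀ ℓ : L,
      (((ta.apply σ τ).κ ℓ : ℕ) : ℤ) - (σ.κ ℓ : ℤ)
        = (∑ r : R, if (ta.rule r).dst = ℓ then ((τ.count r : ℕ) : ℤ) else 0)
          - (∑ r : R, if (ta.rule r).src = ℓ then ((τ.count r : ℕ) : ℤ) else 0)
  | [], σ, _, ℓ => by simp [TA.apply]
  | e :: τ, σ, ⟨hen, happ⟩, ℓ => by
    rw [TA.apply]
    have ih := apply_flow τ ((ta.rule e).fire σ) happ ℓ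
    rw [sum_ite_count_cons, sum_ite_count_cons]
    have h2 := fire_κ_int (ta.rule e) σ hen.1 ℓ
    linarith

lemma apply_shared {ta : TA L V P R} :
    ∀ (τ : List R) (σ : Config L V P), ta.applicable σ τ → ∀ z : V,
      (((ta.apply σ τ).g z : ℕ) : ℤ) - (σ.g z : ℤ)
        = ∑ r : R, ((τ.count r : ℕ) : ℤ) * ((ta.rule r).upd z : ℤ)
  | [], σ, _, z => by simp [TA.apply]
  | e :: τ, σ, ⟨hen, happ⟩, z => by
    rw [TA.apply]
    have ih := apply_shared τ ((ta.rule e).fire σ) happ z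
    have hsum : ∑ r : R, (((e :: τ).count r : ℕ) : ℤ) * ((ta.rule r).upd z : ℤ)
        = (∑ r : R, ((τ.count r : ℕ) : ℤ) * ((ta.rule r).upd z : ℤ))
          + ((ta.rule e).upd z : ℤ) := by
      have : ∀ r : R, (((e :: τ).count r : ℕ) : ℤ) * ((ta.rule r).upd z : ℤ)
          = ((τ.count r : ℕ) : ℤ) * ((ta.rule r).upd z : ℤ)
            + (if r = e then ((ta.rule r).upd z : ℤ) else 0) := by
        intro r
        rw [count_cons_cast]
        split_ifs <;> ring
      rw [Finset.sum_congr rfl (fun r _ => this r), Finset.sum_add_distrib]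
      simp [Finset.sum_ite_eq']
    have h2 : (((ta.rule e).fire σ).g z : ℤ) = (σ.g z : ℤ) + ((ta.rule e).upd z : ℤ) := by
      show ((σ.g z + (ta.rule e).upd z : ℕ) : ℤ) = _
      push_cast; ring
    rw [hsum]
    linarith

lemma guards_hold_of_mem {ta : TA L V P R} :
    ∀ (τ : List R) (σ : Config L V P), ta.applicable σ τ → ta.steady σ τ →
      ∀ r ∈ τ, ∀ φ ∈ (ta.rule r).guard, φ.holds σ.g σ.p
  | [], σ, _, _, r, hr => by simp at hr
  | e :: τ, σ, ⟨hen, happ⟩, hst, r, hr => by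
    obtain ⟨hctx1, hst'⟩ := steady_tail hst
    rcases List.mem_cons.mp hr with rfl | hr'
    · exact hen.2
    · intro φ hφ
      have := guards_hold_of_mem τ ((ta.rule e).fire σ) happ hst' r hr' φ hφ
      exact (ta.holds_iff_of_context_eq hctx1 ⟨r, hφ⟩).mp this

lemma chain_of_mem {ta : TA L V P R} :
    ∀ (τ : List R) (σ : Config L V P), ta.applicable σ τ → ∀ r ∈ τ,
      ∃ (c : List R) (hne : c ≠ []), (∀ x ∈ c, x ∈ τ) ∧
        0 < σ.κ (ta.rule (c.head hne)).src ∧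
        List.Chain' (fun a b => (ta.rule a).dst = (ta.rule b).src) c ∧
        c.getLast hne = r
  | [], σ, _, r, hr => by simp at hr
  | e :: τ, σ, ⟨hen, happ⟩, r, hr => by
    rcases List.mem_cons.mp hr with rfl | hr'
    · exact ⟨[r], by simp, by simp, by simpa using hen.1, List.isChain_singleton _, by simp⟩
    · obtain ⟨c, hne, hmem, hhead, hchain, hlast⟩ :=
        chain_of_mem τ ((ta.rule e).fire σ) happ r hr'
      by_cases hpos : 0 < σ.κ (ta.rule (c.head hne)).src
      · exact ⟨c, hne, fun x hx => List.mem_cons_of_mem _ (hmem x hx),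
          hpos, hchain, hlast⟩
      · have hz : σ.κ (ta.rule (c.head hne)).src = 0 := by omega
        have hdst : (ta.rule (c.head hne)).src = (ta.rule e).dst := by
          by_contra hne'
          have hfire : ((ta.rule e).fire σ).κ (ta.rule (c.head hne)).src
              = σ.κ (ta.rule (c.head hne)).src
                + (if (ta.rule (c.head hne)).src = (ta.rule e).dst then 1 else 0)
                - (if (ta.rule (c.head hne)).src = (ta.rule e).src then 1 else 0) := rfl
          rw [hz, if_neg hne'] at hfire
          omega
        refine ⟨e :: c, by simp, ?_, ?_, ?_, ?_⟩
        · intro x hx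
          rcases List.mem_cons.mp hx with rfl | hx'
          · exact List.mem_cons_self
          · exact List.mem_cons_of_mem _ (hmem x hx')
        · simpa using hen.1
        · rw [List.Chain', List.isChain_cons]
          refine ⟨?_, hchain⟩
          intro b hb
          rw [List.head?_eq_head hne] at hb
          simp at hb
          rw [← hb]
          exact hdst.symm
        · rw [List.getLast_cons hne]
          exact hlast

lemma construct {ta : TA L V P R} {σ' : Config L V P} :
    ∀ (n : ℕ) (σ : Config L V P) (y : R → ℕ), (∑ r : R, y r) = n →
      ta.witnessesSteady σ σ' y →
      ∃ τ : List R, ta.applicable σ τ ∧ ta.apply σ τ = σ' ∧ (∀ r, τ.count r = y r) ∧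
        ∀ σ'' ∈ ta.visited σ τ, ta.context σ'' = ta.context σ := by
  intro n
  induction n using Nat.strong_induction_on with
  | _ n ih =>
  intro σ y hsum hw
  by_cases h0 : ∃ r0, 0 < y r0
  · obtain ⟨r0, h0⟩ := h0
    obtain ⟨e, he, hen, hw'⟩ := step_witness hw h0
    have hlt : ∑ r : R, decY y e r < n := hsum ▸ sum_decY he
    obtain ⟨τ', happ, happly, hcount, hctxs⟩ := ih _ hlt _ _ rfl hw'
    have hctx1 : ta.context ((ta.rule e).fire σ) = ta.context σ :=
      (hw'.2.1).trans hw.2.1.symm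
    refine ⟨e :: τ', ⟨hen, happ⟩, happly, ?_, ?_⟩
    · intro r
      rw [List.count_cons, hcount r]
      unfold decY
      by_cases hre : r = e
      · subst hre; simp; omega
      · have h2 : ¬(e = r) := fun hh => hre hh.symm
        simp [hre, h2]
    · intro σ'' hmem
      rw [TA.visited] at hmem
      rcases List.mem_cons.mp hmem with rfl | h
      · rfl
      · rw [hctxs σ'' h, hctx1]
  · push_neg at h0
    have hy : ∀ r, y r = 0 := fun r => Nat.eq_zero_of_not_pos (fun h => absurd h (by
      simpa using h0 r))
    obtain ⟨hp, hctx, hflow, hshared, _, _⟩ := hw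
    have hκ : σ.κ = σ'.κ := by
      funext ℓ
      have := hflow ℓ
      simp [hy] at this
      omega
    have hg : σ.g = σ'.g := by
      funext z
      have := hshared z
      simp [hy] at this
      omega
    have heq : σ = σ' := Config.ext' hκ hg hp
    refine ⟨[], trivial, heq, fun r => by simp [hy], ?_⟩
    intro σ'' hmem
    simp [TA.visited] at hmem
    rw [hmem]

end Aux7
/-- (1) If `τ` is a steady schedule applicable to `σ` with `τ(σ) = σ'`, then the assignment
sending each rule `r` to its number of occurrences in `τ` witnesses steady reachability from
`σ` to `σ'`.  (2) Conversely, if `y` witnesses steady reachability from `σ` to `σ'`, then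
there is a steady schedule `τ` applicable to `σ` with `τ(σ) = σ'` in which every rule `r`
occurs exactly `y r` times. -/
theorem witness_observation [Fintype P] [DecidableEq L] [DecidableEq R] [Fintype L] [Fintype R]
    (ta : TA L V P R) (σ σ' : Config L V P)
    (hσ : ta.validConfig σ) (hσ' : ta.validConfig σ') :
    (∀ τ : List R, ta.applicable σ τ → ta.steady σ τ → ta.apply σ τ = σ' →
      ta.witnessesSteady σ σ' (fun r => τ.count r)) ∧
    (∀ y : R → ℕ, ta.witnessesSteady σ σ' y →
      ∃ τ : List R, ta.applicable σ τ ∧ ta.steady σ τ ∧ ta.apply σ τ = σ' ∧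
        ∀ r : R, τ.count r = y r) := by
  constructor
  · intro τ happ hst happly
    subst happly
    refine ⟨(ta.apply_p τ σ).symm, (hst _ (ta.apply_mem_visited τ σ)).symm, ?_, ?_, ?_, ?_⟩
    · intro ℓ
      exact apply_flow τ σ happ ℓ
    · intro z
      exact apply_shared τ σ happ z
    · intro r hr
      have hr' : r ∈ τ := List.count_pos_iff.mp hr
      exact guards_hold_of_mem τ σ happ hst r hr'
    · intro r hr
      have hr' : r ∈ τ := List.count_pos_iff.mp hr
      obtain ⟨c, hne, hmem, hhead, hchain, hlast⟩ := chain_of_mem τ σ happ r hr'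
      exact ⟨c, hne, fun x hx => List.count_pos_iff.mpr (hmem x hx), hhead, hchain, hlast⟩
  · intro y hw
    obtain ⟨τ, happ, happly, hcount, hctxs⟩ := construct (∑ r : R, y r) σ y rfl hw
    exact ⟨τ, happ, hctxs, happly, hcount⟩
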